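/- A square real matrix B = (b_ij) is skew-symmetrizable if and only if B is sign-skew-symmetric and for all k ≥ 3 and all indices i_1, ..., i_k, the cyclic products satisfy b_{i_1 i_2} b_{i_2 i_3} ··· b_{i_k i_1} = (-1)^k b_{i_2 i_1} b_{i_3 i_2} ··· b_{i_1 i_k}. -/

import Mathlib

/-- A square real matrix is sign-skew-symmetric if for all `i, j` either both
`B i j` and `B j i` vanish, or they have opposite signs. -/
def SignSkewSymmetric {n : ℕ} (B : Matrix (Fin n) (Fin n) ℝ) : Prop :=
  ∀ i j, (B i j = 0 ∧ B j i = 0) ∨ B i j * B j i < 0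

namespace SkewAux

variable {n : ℕ} (B : Matrix (Fin n) (Fin n) ℝ)

/-- edge relation -/
def E (i j : Fin n) : Prop := B i j ≠ 0

/-- edge weight -/
noncomputable def w (i j : Fin n) : ℝ := -B i j / B j i

/-- weight of a walk -/
noncomputable def wt : List (Fin n) → ℝ
  | a :: b :: l => w B a b * wt (b :: l)
  | _ => 1

@[simp] lemma wt_nil : wt B ([] : List (Fin n)) = 1 := rfl
@[simp] lemma wt_single (a : Fin n) : wt B [a] = 1 := rfl
@[simp] lemma wt_cons_cons (a b : Fin n) (l : List (Fin n)) :
    wt B (a :: b :: l) = w B a b * wt B (b :: l) := rfl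

variable {B}

lemma E.symm {i j : Fin n} (hS : SignSkewSymmetric B) (h : E B i j) : E B j i := by
  rcases hS i j with ⟨h1, _⟩ | h1
  · exact absurd h1 h
  · intro h2; rw [h2, mul_zero] at h1; exact lt_irrefl 0 h1

lemma diag_zero (hS : SignSkewSymmetric B) (i : Fin n) : B i i = 0 := by
  rcases hS i i with ⟨h1, _⟩ | h1
  · exact h1
  · nlinarith [mul_self_nonneg (B i i)]

lemma w_pos {i j : Fin n} (hS : SignSkewSymmetric B) (h : E B i j) : 0 < w B i j := by
  rcases hS i j with ⟨h1, _⟩ | h1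
  · exact absurd h1 h
  · have hji : B j i ≠ 0 := E.symm hS h
    have : w B i j = -(B i j * B j i) / (B j i * B j i) := by
      rw [w]; field_simp
    rw [this]
    refine div_pos (by nlinarith) ?_
    rcases (mul_self_nonneg (B j i)).lt_or_eq with h2 | h2
    · exact h2
    · exact absurd (by nlinarith : B j i * B j i = 0) (by positivity)

lemma w_mul {i j : Fin n} (hS : SignSkewSymmetric B) (h : E B i j) :
    w B i j * w B j i = 1 := by
  have hji : B j i ≠ 0 := E.symm hS h
  have hij : B i j ≠ 0 := h
  rw [w, w]
  field_simp

lemma w_inv {i j : Fin n} (hS : SignSkewSymmetric B) (h : E B i j) :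
    w B j i = (w B i j)⁻¹ := by
  have := w_mul hS h
  have hw : w B i j ≠ 0 := ne_of_gt (w_pos hS h)
  field_simp
  linarith [this]

lemma wt_pos (hS : SignSkewSymmetric B) :
    ∀ l : List (Fin n), l.Chain' (E B) → 0 < wt B l
  | [], _ => one_pos
  | [_], _ => one_pos
  | a :: b :: l, h => by
    simp only [List.Chain', List.isChain_cons_cons] at h
    have := wt_pos hS (b :: l) h.2
    have := w_pos hS h.1
    simpa using mul_pos ‹0 < w B a b› ‹0 < wt B (b :: l)›

lemma wt_ne_zero (hS : SignSkewSymmetric B) (l : List (Fin n)) (h : l.Chain' (E B)) :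
    wt B l ≠ 0 := ne_of_gt (wt_pos hS l h)

lemma wt_append :
    ∀ (l₁ : List (Fin n)) (h : l₁ ≠ []) (t : List (Fin n)),
      wt B (l₁ ++ t) = wt B l₁ * wt B (l₁.getLast h :: t)
  | [], h, _ => absurd rfl h
  | [a], _, t => by simp
  | a :: b :: l, _, t => by
    have ih := wt_append (b :: l) (by simp) t
    simp only [List.cons_append, wt_cons_cons] at *
    rw [ih, List.getLast_cons (by simp : (b :: l) ≠ [])]
    ring

lemma wt_reverse (hS : SignSkewSymmetric B) :
    ∀ (l : List (Fin n)), l.Chain' (E B) → wt B l.reverse = (wt B l)⁻¹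
  | [], _ => by simp
  | [a], _ => by simp
  | a :: b :: l, h => by
    simp only [List.Chain', List.isChain_cons_cons] at h
    have ih := wt_reverse hS (b :: l) h.2
    have hrev : (a :: b :: l).reverse = (b :: l).reverse ++ [a] := by simp
    have hne : (b :: l).reverse ≠ [] := by simp
    have hlast : (b :: l).reverse.getLast hne = b := by
      rw [List.getLast_reverse]; rfl
    rw [hrev, wt_append _ hne [a], hlast, ih, wt_cons_cons, wt_single,
      wt_cons_cons, w_inv hS h.1, mul_inv]
    ring


section Cyclic

variable {n : ℕ} {B : Matrix (Fin n) (Fin n) ℝ}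

variable (B) in
/-- bridge: the weight of a walk as a product over `Fin` -/
lemma wt_eq_prod (i₀ : Fin n) :
    ∀ (l : List (Fin n)) (a : Fin n),
      wt B (a :: l) =
        ∏ t : Fin l.length, w B ((a :: l).getD (t : ℕ) i₀) ((a :: l).getD ((t : ℕ) + 1) i₀)
  | [], a => by simp
  | b :: l, a => by
    have ih := wt_eq_prod i₀ l b
    rw [wt_cons_cons, ih]
    simp only [List.length_cons]
    rw [Fin.prod_univ_succ]
    simp only [Fin.val_succ, Fin.val_zero, List.getD_cons_zero, List.getD_cons_succ]

lemma wt_cycle (hS : SignSkewSymmetric B)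
    (hC : ∀ m : ℕ, ∀ f : Fin (m + 3) → Fin n,
      ∏ t : Fin (m + 3), B (f t) (f (t + 1)) =
        (-1 : ℝ) ^ (m + 3) * ∏ t : Fin (m + 3), B (f (t + 1)) (f t))
    (l : List (Fin n)) (hne : l ≠ []) (hch : l.Chain' (E B))
    (hcl : l.head hne = l.getLast hne) : wt B l = 1 := by
  match l, hne with
  | [a], _ => simp
  | [a, b], _ =>
    simp only [List.head_cons, List.getLast_singleton, List.getLast_cons] at hcl
    subst hcl
    simp only [List.Chain', List.isChain_cons_cons] at hch
    exact absurd (diag_zero hS a) hch.1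
  | [a, b, c], _ =>
    have hcl' : a = c := by simpa using hcl
    subst hcl'
    simp only [List.Chain', List.isChain_cons_cons] at hch
    rw [wt_cons_cons, wt_cons_cons, wt_single, mul_one, w_mul hS hch.1]
  | a :: b :: c :: e :: l, _ =>
    set L : List (Fin n) := a :: b :: c :: e :: l with hL
    have hlen : L.length = l.length + 4 := by simp [hL]
    have hKlt : l.length + 3 < L.length := by omega
    have hbridge := wt_eq_prod B a (b :: c :: e :: l) a
    have hlen1 : (b :: c :: e :: l).length = l.length + 3 := by simp
    rw [hlen1, ← hL] at hbridge
    set f : Fin (l.length + 3) → Fin n := fun t => L.getD (t : ℕ) a with hf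
    have hgetD : ∀ (m : ℕ) (hm : m < L.length), L.getD m a = L[m] :=
      fun m hm => List.getD_eq_getElem L a hm
    have hstep : ∀ t : Fin (l.length + 3), L.getD ((t : ℕ) + 1) a = f (t + 1) := by
      intro t
      by_cases ht : (t : ℕ) + 1 < l.length + 3
      · have hv : ((t + 1 : Fin (l.length + 3)) : ℕ) = (t : ℕ) + 1 := by
          rw [Fin.val_add_one]
          have : t ≠ Fin.last (l.length + 2) := by
            intro h
            rw [h] at ht
            simp [Fin.last] at ht
          simp [this]
        rw [hf]
        simp only [hv]
      · -- t is the last index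
        have htv : (t : ℕ) = l.length + 2 := by have := t.isLt; omega
        have hv : ((t + 1 : Fin (l.length + 3)) : ℕ) = 0 := by
          rw [Fin.val_add_one]
          have : t = Fin.last (l.length + 2) := by
            apply Fin.ext; simp [Fin.last, htv]
          simp [this]
        rw [hf]
        simp only [hv]
        rw [htv, hgetD (l.length + 3) (by omega), hgetD 0 (by omega)]
        have h1 : L.getLast (by simp [hL]) = L[l.length + 3]'(by omega) := by
          rw [List.getLast_eq_getElem]
          congr 1 <;> omega
        have h2 : L.head (by simp [hL]) = L[0]'(by omega) := List.head_eq_getElem _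
        rw [← h1, ← h2]
        exact hcl.symm
    have hedge : ∀ t : Fin (l.length + 3), E B (f t) (f (t + 1)) := by
      intro t
      rw [← hstep t, hf]
      simp only
      rw [hgetD (t : ℕ) (by have := t.isLt; omega), hgetD ((t : ℕ) + 1) (by have := t.isLt; omega)]
      have := List.isChain_iff_getElem.mp hch (t : ℕ)
        (by have := t.isLt; simp only [hL, List.length_cons]; omega)
      simpa [List.get_eq_getElem] using this
    have hprod : wt B L = ∏ t : Fin (l.length + 3), w B (f t) (f (t + 1)) := by
      rw [hbridge]
      exact Finset.prod_congr rfl fun t _ => by rw [hstep t]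
    rw [hprod]
    have hrevne : ∀ t : Fin (l.length + 3), B (f (t + 1)) (f t) ≠ 0 :=
      fun t => E.symm hS (hedge t)
    have hfwd := hC l.length f
    calc ∏ t : Fin (l.length + 3), w B (f t) (f (t + 1))
        = ∏ t : Fin (l.length + 3), (-B (f t) (f (t + 1)) / B (f (t + 1)) (f t)) := rfl
      _ = (∏ t : Fin (l.length + 3), -B (f t) (f (t + 1))) /
            ∏ t : Fin (l.length + 3), B (f (t + 1)) (f t) := Finset.prod_div_distrib _ _
      _ = 1 := by
          have h1 : ∏ t : Fin (l.length + 3), -B (f t) (f (t + 1))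
              = ∏ t : Fin (l.length + 3), ((-1 : ℝ) * B (f t) (f (t + 1))) :=
            Finset.prod_congr rfl fun t _ => by ring
          have hPne : (∏ t : Fin (l.length + 3), B (f (t + 1)) (f t)) ≠ 0 :=
            Finset.prod_ne_zero_iff.mpr fun t _ => hrevne t
          rw [h1, Finset.prod_mul_distrib, Finset.prod_const, Finset.card_univ,
            Fintype.card_fin, hfwd, ← mul_assoc, ← mul_pow]
          field_simp
          exact one_pow _

variable (B) in
/-- walk predicate -/
def IsWalk (l : List (Fin n)) (a b : Fin n) : Prop :=
  ∃ h : l ≠ [], l.Chain' (E B) ∧ l.head h = a ∧ l.getLast h = b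

lemma isWalk_single (a : Fin n) : IsWalk B [a] a a :=
  ⟨by simp, List.isChain_singleton a, rfl, rfl⟩

lemma IsWalk.reverse (hS : SignSkewSymmetric B) {l : List (Fin n)} {a b : Fin n}
    (h : IsWalk B l a b) : IsWalk B l.reverse b a := by
  obtain ⟨hne, hch, hh, hl⟩ := h
  have hrne : l.reverse ≠ [] := by simpa using hne
  refine ⟨hrne, ?_, ?_, ?_⟩
  · rw [List.Chain', List.isChain_reverse]
    exact List.IsChain.imp (fun x y hxy => E.symm hS hxy) hch
  · rw [List.head_reverse]; exact hl
  · rw [List.getLast_reverse]; exact hh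

lemma IsWalk.append (hS : SignSkewSymmetric B) {p q : List (Fin n)} {a b c : Fin n}
    (hp : IsWalk B p a b) (hq : IsWalk B q b c) :
    IsWalk B (p ++ q.tail) a c ∧ wt B (p ++ q.tail) = wt B p * wt B q := by
  obtain ⟨hpne, hpch, hph, hpl⟩ := hp
  obtain ⟨hqne, hqch, hqh, hql⟩ := hq
  have hq' : b :: q.tail = q := by rw [← hqh]; exact List.cons_head_tail hqne
  cases htail : q.tail with
  | nil =>
    have hq2 : q = [b] := by rw [← hq', htail]
    have hcb : c = b := by subst hq2; simpa using hql.symm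
    simp only [List.append_nil]
    exact ⟨⟨hpne, hpch, hph, hpl.trans hcb.symm⟩, by rw [hq2]; simp⟩
  | cons y t =>
    have hq3 : q = b :: y :: t := by rw [← hq', htail]
    subst hq3
    have hby : E B b y := (List.isChain_cons_cons.mp hqch).1
    have hchyt : (y :: t).Chain' (E B) := (List.isChain_cons_cons.mp hqch).2
    have happne : p ++ y :: t ≠ [] := by simp
    have hchain : (p ++ y :: t).Chain' (E B) := by
      apply List.IsChain.append hpch hchyt
      intro x hx y' hy'
      rw [List.getLast?_eq_getLast hpne] at hx
      simp only [Option.mem_def, Option.some.injEq] at hx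
      simp only [List.head?_cons, Option.mem_def, Option.some.injEq] at hy'
      rw [← hx, ← hy', hpl]
      exact hby
    refine ⟨⟨happne, hchain, ?_, ?_⟩, ?_⟩
    · rw [List.head_append]
      simp [List.isEmpty_iff, hpne, hph]
    · rw [List.getLast_append]
      simp only [List.isEmpty_cons, Bool.false_eq_true, reduceDIte]
      rw [← hql, List.getLast_cons (by simp : (y :: t) ≠ [])]
    · rw [wt_append p hpne (y :: t), hpl]

lemma wt_unique (hS : SignSkewSymmetric B)
    (hC : ∀ m : ℕ, ∀ f : Fin (m + 3) → Fin n,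
      ∏ t : Fin (m + 3), B (f t) (f (t + 1)) =
        (-1 : ℝ) ^ (m + 3) * ∏ t : Fin (m + 3), B (f (t + 1)) (f t))
    {p q : List (Fin n)} {a b : Fin n}
    (hp : IsWalk B p a b) (hq : IsWalk B q a b) : wt B p = wt B q := by
  have hqr : IsWalk B q.reverse b a := hq.reverse hS
  obtain ⟨hw, hwt⟩ := hp.append hS hqr
  obtain ⟨hne, hch, hh, hl⟩ := hw
  have h1 : wt B (p ++ q.reverse.tail) = 1 := wt_cycle hS hC _ hne hch (hh.trans hl.symm)
  rw [hwt] at h1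
  obtain ⟨hqne, hqch, _, _⟩ := hq
  rw [wt_reverse hS q hqch] at h1
  have hq0 : wt B q ≠ 0 := wt_ne_zero hS q hqch
  field_simp at h1
  exact h1

variable (B) in
/-- reachability -/
def Reach (a b : Fin n) : Prop := ∃ l, IsWalk B l a b

lemma min'_eq_of_eq {α : Type*} [LinearOrder α] {s t : Finset α} (h : s = t)
    (hs : s.Nonempty) : s.min' hs = t.min' (h ▸ hs) := by subst h; rfl

end Cyclic

end SkewAux

open SkewAux

theorem skew_symmetrizable_iff_sss_and_cyclic {n : ℕ} (B : Matrix (Fin n) (Fin n) ℝ) :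
    (∃ d : Fin n → ℝ, (∀ i, 0 < d i) ∧ ∀ i j, d i * B i j = -(d j * B j i)) ↔
    (SignSkewSymmetric B ∧
      ∀ m : ℕ, ∀ f : Fin (m + 3) → Fin n,
        ∏ t : Fin (m + 3), B (f t) (f (t + 1)) =
          (-1 : ℝ) ^ (m + 3) * ∏ t : Fin (m + 3), B (f (t + 1)) (f t)) := by
  constructor
  · rintro ⟨d, hd, h⟩
    constructor
    · intro i j
      by_cases hij : B i j = 0
      · left
        have := h i j
        rw [hij, mul_zero] at this
        constructor
        · exact hij
        · have hdj := hd j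
          have : d j * B j i = 0 := by linarith
          rcases mul_eq_zero.mp this with h' | h'
          · exact absurd h' (ne_of_gt hdj)
          · exact h'
      · right
        have hji : B j i = -(d i * B i j) / d j := by
          have := h i j
          have hdj : d j ≠ 0 := ne_of_gt (hd j)
          field_simp
          linarith
        have h2 : B i j * B j i = -(d i * (B i j * B i j)) / d j := by
          rw [hji]; ring
        rw [h2]
        apply div_neg_of_neg_of_pos _ (hd j)
        have : 0 < B i j * B i j := by
          rcases (mul_self_nonneg (B i j)).lt_or_eq with h' | h'
          · exact h'
          · exact absurd h'.symm (mul_ne_zero hij hij)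
        nlinarith [hd i]
    · intro m f
      have key : ∀ t : Fin (m + 3), B (f t) (f (t + 1)) =
          -(d (f (t + 1)) * B (f (t + 1)) (f t)) / d (f t) := by
        intro t
        have := h (f t) (f (t + 1))
        have hdt : d (f t) ≠ 0 := ne_of_gt (hd (f t))
        field_simp
        linarith
      calc ∏ t : Fin (m + 3), B (f t) (f (t + 1))
          = ∏ t : Fin (m + 3), -(d (f (t + 1)) * B (f (t + 1)) (f t)) / d (f t) :=
            Finset.prod_congr rfl fun t _ => key t
        _ = (∏ t : Fin (m + 3), -(d (f (t + 1)) * B (f (t + 1)) (f t))) / ∏ t : Fin (m + 3), d (f t) :=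
            Finset.prod_div_distrib _ _
        _ = ((-1 : ℝ) ^ (m + 3) * ((∏ t : Fin (m + 3), d (f (t + 1))) * ∏ t : Fin (m + 3), B (f (t + 1)) (f t))) /
              ∏ t : Fin (m + 3), d (f t) := by
            have h1 : ∏ t : Fin (m + 3), -(d (f (t + 1)) * B (f (t + 1)) (f t))
                = ∏ t : Fin (m + 3), ((-1 : ℝ) * d (f (t + 1)) * B (f (t + 1)) (f t)) :=
              Finset.prod_congr rfl fun t _ => by ring
            rw [h1, Finset.prod_mul_distrib, Finset.prod_mul_distrib, Finset.prod_const,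
              Finset.card_univ, Fintype.card_fin, mul_assoc]
        _ = (-1 : ℝ) ^ (m + 3) * ∏ t : Fin (m + 3), B (f (t + 1)) (f t) := by
            have he : ∏ t : Fin (m + 3), d (f (t + 1)) = ∏ t : Fin (m + 3), d (f t) := by
              have := Equiv.prod_comp (Equiv.addRight (1 : Fin (m + 3))) (fun x => d (f x))
              simpa [Equiv.coe_addRight] using this
            rw [he]
            have hP : (∏ t : Fin (m + 3), d (f t)) ≠ 0 :=
              ne_of_gt (Finset.prod_pos fun t _ => hd (f t))
            field_simp
  · rintro ⟨hS, hC⟩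
    classical
    have hrefl : ∀ i, Reach B i i := fun i => ⟨[i], isWalk_single i⟩
    have hsymm : ∀ {i j}, Reach B i j → Reach B j i := by
      rintro i j ⟨l, hl⟩
      exact ⟨l.reverse, hl.reverse hS⟩
    have htrans : ∀ {i j k}, Reach B i j → Reach B j k → Reach B i k := by
      rintro i j k ⟨p, hp⟩ ⟨q, hq⟩
      exact ⟨p ++ q.tail, (hp.append hS hq).1⟩
    set S : Fin n → Finset (Fin n) := fun i => Finset.univ.filter (fun j => Reach B j i)
      with hSdef
    have hSne : ∀ i, (S i).Nonempty := fun i => ⟨i, by simp [hSdef, hrefl i]⟩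
    set rep : Fin n → Fin n := fun i => (S i).min' (hSne i) with hrepdef
    have hrep : ∀ i, Reach B (rep i) i := by
      intro i
      have := Finset.min'_mem (S i) (hSne i)
      simpa [hSdef] using this
    have hrepeq : ∀ {i j}, Reach B i j → rep i = rep j := by
      intro i j hij
      have hSS : S i = S j := by
        ext k
        simp only [hSdef, Finset.mem_filter, Finset.mem_univ, true_and]
        exact ⟨fun h => htrans h hij, fun h => htrans h (hsymm hij)⟩
      exact min'_eq_of_eq hSS (hSne i)
    choose wlk hwlk using fun i => hrep i
    set d : Fin n → ℝ := fun i => wt B (wlk i) with hddef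
    have hdpos : ∀ i, 0 < d i := by
      intro i
      obtain ⟨_, hch, _, _⟩ := hwlk i
      exact wt_pos hS _ hch
    have hedge : ∀ i j, E B i j → d j = d i * w B i j := by
      intro i j hij
      have hwij : IsWalk B [i, j] i j := by
        refine ⟨by simp, ?_, rfl, by simp⟩
        simp [List.Chain', List.isChain_cons_cons, hij]
      have hreps : rep i = rep j := hrepeq ⟨[i, j], hwij⟩
      obtain ⟨hw2, hwt2⟩ := (hwlk i).append hS hwij
      have huniq : wt B (wlk j) = wt B (wlk i ++ [i, j].tail) :=
        wt_unique hS hC (hreps ▸ hwlk j) hw2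
      rw [hddef]
      simp only
      rw [huniq, hwt2, wt_cons_cons, wt_single, mul_one]
    refine ⟨d, hdpos, ?_⟩
    intro i j
    by_cases hij : B i j = 0
    · have hji : B j i = 0 := by
        rcases hS i j with ⟨_, h2⟩ | h2
        · exact h2
        · rw [hij, zero_mul] at h2
          exact absurd h2 (lt_irrefl 0)
      rw [hij, hji]
      ring
    · have hji : B j i ≠ 0 := E.symm hS hij
      rw [hedge i j hij, w]
      field_simp
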